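/- Equality case in the composition bound: for real k₁, k₂ ∈ [0,1), the quantity |(μ + τν)/(1 + τ conj(μ)ν)| with |μ| = k₁, |ν| = k₂, |τ| = 1 achieves its maximum value (k₁+k₂)/(1+k₁k₂) exactly when τν is a nonnegative real multiple of μ (i.e., τν·conj(μ) is a nonnegative real number), or when μ = 0. -/

import Mathlib

open Complex

/-- Equality case in the composition bound: with `|μ| = k₁ < 1`, `|ν| = k₂ < 1`
and `|τ| = 1`, the norm of `w = (μ + τν)/(1 + τ conj(μ) ν)` equals the maximal
value `(k₁ + k₂)/(1 + k₁k₂)` exactly when `τν·conj(μ)` is a nonnegative real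
number, or when `μ = 0`. -/
theorem beltrami_composition_equality_case
    (k₁ k₂ : ℝ) (hk₁ : k₁ < 1) (hk₂ : k₂ < 1)
    (μ ν τ : ℂ) (hμ : ‖μ‖ = k₁) (hν : ‖ν‖ = k₂)
    (hτ : ‖τ‖ = 1) :
    ‖(μ + τ * ν) / (1 + τ * (starRingEnd ℂ) μ * ν)‖ =
        (k₁ + k₂) / (1 + k₁ * k₂) ↔
      (∃ r : ℝ, 0 ≤ r ∧ τ * ν * (starRingEnd ℂ) μ = (r : ℂ)) ∨ μ = 0 := by
  have hk₁0 : 0 ≤ k₁ := hμ ▸ norm_nonneg μ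
  have hk₂0 : 0 ≤ k₂ := hν ▸ norm_nonneg ν
  have hkk : k₁ * k₂ < 1 := by nlinarith
  set z : ℂ := τ * ν * (starRingEnd ℂ) μ with hz
  have habsz : ‖z‖ = k₁ * k₂ := by
    rw [hz, norm_mul, norm_mul, hτ, hν, Complex.norm_conj, hμ]; ring
  set t : ℝ := z.re with ht
  have hN : (‖μ + τ * ν‖)^2 = k₁^2 + k₂^2 + 2*t := by
    rw [Complex.sq_norm, Complex.normSq_add]
    have h1 : Complex.normSq μ = k₁^2 := by rw [← Complex.sq_norm, hμ]
    have h2 : Complex.normSq (τ * ν) = k₂^2 := by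
      rw [← Complex.sq_norm, norm_mul, hτ, hν, one_mul]
    have h3 : (μ * (starRingEnd ℂ) (τ * ν)).re = t := by
      have he : μ * (starRingEnd ℂ) (τ * ν) = (starRingEnd ℂ) z := by
        rw [hz]; simp only [map_mul, Complex.conj_conj]; ring
      rw [he, Complex.conj_re, ht]
    rw [h1, h2, h3]
  have hD : (‖1 + z‖)^2 = 1 + (k₁*k₂)^2 + 2*t := by
    rw [Complex.sq_norm, Complex.normSq_add]
    have h3 : ((1:ℂ) * (starRingEnd ℂ) z).re = t := by
      rw [one_mul, Complex.conj_re]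
    have h4 : Complex.normSq z = (k₁*k₂)^2 := by rw [← Complex.sq_norm, habsz]
    rw [h3, h4]
    simp
  have htabs : |t| ≤ k₁ * k₂ := by
    have h := Complex.abs_re_le_norm z
    rw [habsz] at h; exact h
  have htle : t ≤ k₁ * k₂ := (abs_le.mp htabs).2
  have htge : -(k₁ * k₂) ≤ t := (abs_le.mp htabs).1
  have hDpos : 0 < ‖1 + z‖ := by
    rcases lt_or_eq_of_le (norm_nonneg (1 + z)) with h | h
    · exact h
    · exfalso; nlinarith [hD, sq_nonneg (1 - k₁*k₂)]
  have hM0 : (0:ℝ) < 1 + k₁ * k₂ := by nlinarith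
  have hdenrw : 1 + τ * (starRingEnd ℂ) μ * ν = 1 + z := by rw [hz]; ring
  rw [hdenrw, norm_div]
  have hNnn : 0 ≤ ‖μ + τ * ν‖ := norm_nonneg _
  have hiff : ‖μ + τ * ν‖ / ‖1 + z‖ = (k₁ + k₂) / (1 + k₁ * k₂) ↔ t = k₁ * k₂ := by
    rw [div_eq_div_iff hDpos.ne' hM0.ne']
    constructor
    · intro hcross
      have h2 : (‖μ + τ * ν‖)^2 * (1 + k₁*k₂)^2 = (k₁+k₂)^2 * (‖1 + z‖)^2 := by
        have := congrArg (· ^ 2) hcross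
        simpa [mul_pow] using this
      rw [hN, hD] at h2
      have hfact : (1-k₁^2)*(1-k₂^2)*(t - k₁*k₂) = 0 := by linear_combination h2/2
      have hpos : 0 < (1-k₁^2)*(1-k₂^2) := mul_pos (by nlinarith) (by nlinarith)
      rcases mul_eq_zero.mp hfact with h | h
      · exact absurd h hpos.ne'
      · linarith [sub_eq_zero.mp h]
    · intro hteq
      have hN2 : (‖μ + τ * ν‖)^2 = (k₁ + k₂)^2 := by rw [hN, hteq]; ring
      have hN' : ‖μ + τ * ν‖ = k₁ + k₂ := by
        rcases mul_eq_zero.mp (show (‖μ + τ * ν‖ - (k₁+k₂)) * (‖μ + τ * ν‖ + (k₁+k₂)) = 0 by linear_combination hN2) with h | h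
        · linarith [sub_eq_zero.mp h]
        · linarith
      have hD2 : (‖1 + z‖)^2 = (1 + k₁ * k₂)^2 := by rw [hD, hteq]; ring
      have hD' : ‖1 + z‖ = 1 + k₁ * k₂ := by
        rcases mul_eq_zero.mp (show (‖1 + z‖ - (1+k₁*k₂)) * (‖1 + z‖ + (1+k₁*k₂)) = 0 by linear_combination hD2) with h | h
        · linarith [sub_eq_zero.mp h]
        · linarith
      rw [hN', hD']
  rw [hiff]
  constructor
  · intro hteq
    left
    refine ⟨k₁ * k₂, mul_nonneg hk₁0 hk₂0, ?_⟩
    have h5 := Complex.sq_norm z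
    rw [habsz, Complex.normSq_apply] at h5
    have hnz : z.re^2 + z.im^2 = (k₁*k₂)^2 := by linear_combination -h5
    have hre : z.re = k₁ * k₂ := by rw [← ht]; exact hteq
    have him2 : z.im^2 = 0 := by linear_combination hnz - (z.re + k₁*k₂) * hre
    have him : z.im = 0 := by
      have h6 := sq_eq_zero_iff.mp him2
      exact h6
    apply Complex.ext
    · rw [hre]; simp
    · rw [him]; simp
  · rintro (⟨r, hr0, hzr⟩ | hμ0)
    ·
      have h1 : t = r := by rw [ht, hzr]; simp
      have h2 : k₁ * k₂ = r := by
        rw [← habsz, hzr, Complex.norm_of_nonneg hr0]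
      rw [h1, h2]
    · have hk10 : k₁ = 0 := by rw [← hμ, hμ0]; simp
      have hz0 : z = 0 := by rw [hz, hμ0]; simp
      rw [ht, hz0, hk10]; simp
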